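/- (Lemma 4(i).) Under the stated assumptions, 0 < s1 < 1 and s2 < s1. Consequently the cones D1 = {(x1,x2) ∈ (0,∞)² : x1 > s1·x2} and D2 = {(x1,x2) ∈ (0,∞)² : x1 < s2·x2} are disjoint, and D1 and the intermediate cone D0 = {(x1,x2) ∈ (0,∞)² : s2·x2 < x1 < s1·x2} are nonempty. -/

import Mathlib

/-- Lemma 4(i): `0 < s1 < 1`, `s2 < s1`, the cones `D1` and `D2` are disjoint,
and `D1` and the intermediate cone `D0` are nonempty. -/
theorem cones_disjoint_nonempty
    (p1 p2 : ℝ) (hp : p2 < p1)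
    (κ1 κ2 : ℝ → ℝ)
    (hκ2conv : StrictConvexOn ℝ Set.univ κ2) (hκ2diff : Differentiable ℝ κ2)
    (hκ1 : ∀ θ, κ1 θ = κ2 θ + (p1 - p2) * θ)
    (hκ2zero : κ2 0 = 0)
    (γ1 γ2 : ℝ) (hγ2pos : 0 < γ2) (hγ : γ2 < γ1)
    (hγ1root : κ1 (-γ1) = 0) (hγ2root : κ2 (-γ2) = 0)
    (s1 s2 : ℝ)
    (hs1 : s1 = deriv κ1 (-γ1) / deriv κ2 (-γ1))
    (hs2 : s2 = max 0 (deriv κ1 (-γ2) / deriv κ2 (-γ2)))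
    (D1 D2 D0 : Set (ℝ × ℝ))
    (hD1 : D1 = {x | 0 < x.1 ∧ 0 < x.2 ∧ s1 * x.2 < x.1})
    (hD2 : D2 = {x | 0 < x.1 ∧ 0 < x.2 ∧ x.1 < s2 * x.2})
    (hD0 : D0 = {x | 0 < x.1 ∧ 0 < x.2 ∧ s2 * x.2 < x.1 ∧ x.1 < s1 * x.2}) :
    0 < s1 ∧ s1 < 1 ∧ s2 < s1 ∧ Disjoint D1 D2 ∧ D1.Nonempty ∧ D0.Nonempty := by
  set c : ℝ := p1 - p2 with hc_def
  have hc : 0 < c := by simp [hc_def]; linarith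
  -- derivative of κ1 in terms of κ2
  have hder : ∀ θ, deriv κ1 θ = deriv κ2 θ + c := by
    intro θ
    have hfun : κ1 = fun θ => κ2 θ + c * θ := funext fun θ => by rw [hκ1 θ]
    have h1 : HasDerivAt (fun θ : ℝ => κ2 θ + c * θ) (deriv κ2 θ + c) θ := by
      have := ((hκ2diff θ).hasDerivAt).add ((hasDerivAt_id θ).const_mul c)
      rw [show deriv κ2 θ + c = deriv κ2 θ + c * 1 by ring]; exact this
    rw [hfun, h1.deriv]
  set a : ℝ := deriv κ2 (-γ1) with ha_def
  set b : ℝ := deriv κ2 (-γ2) with hb_def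
  -- κ2(-γ1) = c * γ1
  have hκ2γ1 : κ2 (-γ1) = c * γ1 := by
    have := hκ1 (-γ1)
    rw [hγ1root] at this
    linarith [this]
  -- b < 0 : deriv κ2 (-γ2) < slope κ2 (-γ2) 0 = 0
  have hb0 : b < 0 := by
    have h := hκ2conv.deriv_lt_slope (Set.mem_univ (-γ2)) (Set.mem_univ 0)
      (by linarith) (hκ2diff (-γ2))
    rw [slope_def_field, hκ2zero, hγ2root] at h
    simpa using h
  -- a < -c : deriv κ2 (-γ1) < slope κ2 (-γ1) 0 = -c
  have hac : a < -c := by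
    have h := hκ2conv.deriv_lt_slope (Set.mem_univ (-γ1)) (Set.mem_univ 0)
      (by linarith) (hκ2diff (-γ1))
    rw [slope_def_field, hκ2zero, hκ2γ1] at h
    have hγ1pos : 0 < γ1 := lt_trans hγ2pos hγ
    rw [show (0 : ℝ) - c * γ1 = -c * γ1 by ring, show (0 : ℝ) - -γ1 = γ1 by ring,
      mul_div_assoc, div_self hγ1pos.ne'] at h
    simpa using h
  -- a < b by strict monotonicity of deriv κ2
  have hab : a < b := by
    have := hκ2conv.strictMonoOn_deriv (fun x _ => hκ2diff x)
      (Set.mem_univ (-γ1)) (Set.mem_univ (-γ2)) (by linarith)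
    exact this
  have ha0 : a < 0 := by linarith
  have hacneg : a + c < 0 := by linarith
  -- s1 = (a+c)/a
  have hs1' : s1 = (a + c) / a := by rw [hs1, hder]
  have hs2' : s2 = max 0 ((b + c) / b) := by rw [hs2, hder]
  have hs1pos : 0 < s1 := hs1' ▸ div_pos_of_neg_of_neg hacneg ha0
  have hs1lt1 : s1 < 1 := by
    rw [hs1', div_lt_one_of_neg ha0]; linarith
  have hts1 : (b + c) / b < s1 := by
    rw [div_lt_iff_of_neg hb0, hs1', div_mul_eq_mul_div, div_lt_iff_of_neg ha0]
    nlinarith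
  have hs2s1 : s2 < s1 := by
    rw [hs2']; exact max_lt hs1pos hts1
  have hs2nonneg : 0 ≤ s2 := by rw [hs2']; exact le_max_left _ _
  refine ⟨hs1pos, hs1lt1, hs2s1, ?_, ?_, ?_⟩
  · rw [Set.disjoint_left]
    rintro ⟨x1, x2⟩ h1 h2
    rw [hD1] at h1; rw [hD2] at h2
    obtain ⟨-, hx2, hlt1⟩ := h1
    obtain ⟨-, -, hlt2⟩ := h2
    have : s1 * x2 < s2 * x2 := lt_trans hlt1 hlt2
    have := lt_of_mul_lt_mul_right (by linarith [this] : s1 * x2 < s2 * x2)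
      (le_of_lt hx2)
    linarith
  · refine ⟨(s1 + 1, 1), ?_⟩
    rw [hD1]
    refine ⟨by simp only; linarith, by norm_num, by simp only; linarith⟩
  · refine ⟨((s2 + s1) / 2, 1), ?_⟩
    rw [hD0]
    refine ⟨by simp only; linarith, by norm_num, by simp only; linarith,
      by simp only; linarith⟩
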